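/- The sets Δ_k := H_k(Δ), for integers k ≥ 1, have pairwise disjoint interiors, and Δ equals the closure of the union ⋃_{k≥1} Δ_k. -/

import Mathlib

/-- The unit simplex `Δ = {(u,v) : u ≥ 0, v ≥ 0, u+v ≤ 1}`. -/
def Delta : Set (ℝ × ℝ) := {p | 0 ≤ p.1 ∧ 0 ≤ p.2 ∧ p.1 + p.2 ≤ 1}

/-- The map `H_k(u,v) = (v, 1-v)/D_k` where `D_k = k(1-v) + 1 - u`. -/
noncomputable def Hmap (k : ℕ) (p : ℝ × ℝ) : ℝ × ℝ :=
  (p.2 / ((k : ℝ) * (1 - p.2) + 1 - p.1), (1 - p.2) / ((k : ℝ) * (1 - p.2) + 1 - p.1))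

/-- `Hcomp k n = H_{k 1} ∘ H_{k 2} ∘ ⋯ ∘ H_{k n}`. -/
noncomputable def Hcomp (k : ℕ → ℕ) : ℕ → (ℝ × ℝ) → (ℝ × ℝ)
  | 0 => id
  | n + 1 => Hcomp k n ∘ Hmap (k (n + 1))

def Sset (k : ℕ) : Set (ℝ × ℝ) :=
  {p | 0 ≤ p.1 ∧ p.1 + (k : ℝ) * p.2 ≤ 1 ∧ 1 ≤ p.1 + ((k : ℝ) + 1) * p.2}

lemma image_eq (k : ℕ) (hk : 1 ≤ k) : Hmap k '' Delta = Sset k := by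
  have hk' : (1 : ℝ) ≤ (k : ℝ) := by exact_mod_cast hk
  ext ⟨x, y⟩
  constructor
  · rintro ⟨⟨u, v⟩, ⟨hu, hv, huv⟩, heq⟩
    rw [← heq]
    simp only [Hmap, Sset, Set.mem_setOf_eq]
    set D := (k : ℝ) * (1 - v) + 1 - u with hDdef
    have hD : (1 : ℝ) ≤ D := by nlinarith
    have hD0 : (0 : ℝ) < D := lt_of_lt_of_le one_pos hD
    refine ⟨div_nonneg hv hD0.le, ?_, ?_⟩
    · have h : v / D + (k : ℝ) * ((1 - v) / D) = (v + (k : ℝ) * (1 - v)) / D := by ring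
      rw [h, div_le_one hD0]; linarith
    · have h : v / D + ((k : ℝ) + 1) * ((1 - v) / D)
          = (v + ((k : ℝ) + 1) * (1 - v)) / D := by ring
      rw [h, le_div_iff₀ hD0]; linarith
  · rintro ⟨hx, h1, h2⟩
    have hexp : x + ((k : ℝ) + 1) * y = x + (k : ℝ) * y + y := by ring
    have hy : 0 ≤ y := by linarith [h1, h2, hexp]
    have hs : 0 < x + y := by
      rcases eq_or_lt_of_le hy with h | h
      · rw [← h] at h2 ⊢; simp at h2 ⊢; linarith
      · linarith
    refine ⟨((x + ((k : ℝ) + 1) * y - 1) / (x + y), x / (x + y)), ⟨?_, ?_, ?_⟩, ?_⟩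
    · exact div_nonneg (by linarith) hs.le
    · exact div_nonneg hx hs.le
    · rw [← add_div, div_le_one hs]; linarith
    · have hsne : x + y ≠ 0 := hs.ne'
      have hD' : (k : ℝ) * (1 - x / (x + y)) + 1 - (x + ((k : ℝ) + 1) * y - 1) / (x + y)
          = 1 / (x + y) := by field_simp; ring
      simp only [Hmap]
      rw [hD', Prod.mk.injEq]
      constructor
      · field_simp
      · field_simp; ring

lemma Sset_subset (k : ℕ) (hk : 1 ≤ k) : Sset k ⊆ Delta := by
  have hk' : (1 : ℝ) ≤ (k : ℝ) := by exact_mod_cast hk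
  rintro ⟨x, y⟩ ⟨hx, h1, h2⟩
  have hy : 0 ≤ y := by nlinarith
  exact ⟨hx, hy, by nlinarith⟩

lemma interior_strict (k : ℕ) {p : ℝ × ℝ} (hp : p ∈ interior (Sset k)) :
    p.1 + (k : ℝ) * p.2 < 1 ∧ 1 < p.1 + ((k : ℝ) + 1) * p.2 := by
  rw [mem_interior_iff_mem_nhds, Metric.mem_nhds_iff] at hp
  obtain ⟨ε, hε, hball⟩ := hp
  have hq : (p.1 + ε / 2, p.2) ∈ Sset k := by
    apply hball
    rw [Metric.mem_ball, Prod.dist_eq]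
    have h1 : dist (p.1 + ε / 2) p.1 = ε / 2 := by
      rw [Real.dist_eq, show p.1 + ε / 2 - p.1 = ε / 2 by ring,
        abs_of_nonneg (half_pos hε).le]
    simp only [h1, dist_self]
    exact max_lt (by linarith) hε
  have hr : (p.1 - ε / 2, p.2) ∈ Sset k := by
    apply hball
    rw [Metric.mem_ball, Prod.dist_eq]
    have h1 : dist (p.1 - ε / 2) p.1 = ε / 2 := by
      rw [Real.dist_eq, show p.1 - ε / 2 - p.1 = -(ε / 2) by ring, abs_neg,
        abs_of_nonneg (half_pos hε).le]
    simp only [h1, dist_self]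
    exact max_lt (by linarith) hε
  obtain ⟨_, hq1, _⟩ := hq
  obtain ⟨_, _, hr2⟩ := hr
  simp only at hq1 hr2
  constructor <;> linarith

lemma disj_aux {k l : ℕ} (hk : 1 ≤ k) (hkl : k < l) :
    interior (Sset k) ∩ interior (Sset l) = ∅ := by
  ext p
  simp only [Set.mem_inter_iff, Set.mem_empty_iff_false, iff_false, not_and]
  intro hpk hpl
  obtain ⟨_, h2⟩ := interior_strict k hpk
  obtain ⟨h3, _⟩ := interior_strict l hpl
  have hpS : p ∈ Sset k := interior_subset hpk
  obtain ⟨hx, hk1, hk2⟩ := hpS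
  have hy : 0 ≤ p.2 := by nlinarith
  have hcast : (k : ℝ) + 1 ≤ (l : ℝ) := by exact_mod_cast hkl
  nlinarith

lemma mem_U {x y : ℝ} (hx : 0 ≤ x) (hy : 0 < y) (hxy : x + y ≤ 1) :
    (x, y) ∈ ⋃ (k : ℕ) (_ : 1 ≤ k), Sset k := by
  have ht : (1 : ℝ) ≤ (1 - x) / y := by
    rw [le_div_iff₀ hy]; linarith
  set m := ⌊(1 - x) / y⌋₊ with hm
  have hm1 : 1 ≤ m := Nat.le_floor (by exact_mod_cast ht)
  have hfl : (m : ℝ) ≤ (1 - x) / y := Nat.floor_le (by linarith)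
  have hfu : (1 - x) / y < (m : ℝ) + 1 := Nat.lt_floor_add_one _
  refine Set.mem_iUnion.2 ⟨m, Set.mem_iUnion.2 ⟨hm1, hx, ?_, ?_⟩⟩
  · have := (le_div_iff₀ hy).1 hfl
    simp only; linarith
  · have := (div_lt_iff₀ hy).1 hfu
    simp only; linarith

theorem statement8 :
    (∀ k l : ℕ, 1 ≤ k → 1 ≤ l → k ≠ l →
      interior (Hmap k '' Delta) ∩ interior (Hmap l '' Delta) = ∅) ∧
    Delta = closure (⋃ (k : ℕ) (_ : 1 ≤ k), Hmap k '' Delta) := by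
  have himg : (⋃ (k : ℕ) (_ : 1 ≤ k), Hmap k '' Delta)
      = ⋃ (k : ℕ) (_ : 1 ≤ k), Sset k := by
    apply Set.iUnion_congr
    intro k
    ext p
    simp only [Set.mem_iUnion]
    constructor
    · rintro ⟨hk, hp⟩; exact ⟨hk, (image_eq k hk) ▸ hp⟩
    · rintro ⟨hk, hp⟩; exact ⟨hk, (image_eq k hk) ▸ hp⟩
  constructor
  · intro k l hk hl hne
    rw [image_eq k hk, image_eq l hl]
    rcases lt_or_gt_of_ne hne with h | h
    · exact disj_aux hk h
    · rw [Set.inter_comm]; exact disj_aux hl h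
  · rw [himg]
    apply Set.Subset.antisymm
    · rintro ⟨x, y⟩ ⟨hx, hy, hxy⟩
      rcases eq_or_lt_of_le hy with h | h
      · rw [Metric.mem_closure_iff]
        intro ε hε
        set δ := min (ε / 2) (1 / 2) with hδ
        have hδ0 : 0 < δ := lt_min (half_pos hε) one_half_pos
        have hδ1 : δ ≤ 1 / 2 := min_le_right _ _
        have hδε : δ ≤ ε / 2 := min_le_left _ _
        have hx1 : x ≤ 1 := by linarith
        refine ⟨(x * (1 - δ), δ), mem_U (by nlinarith) hδ0 (by nlinarith), ?_⟩
        rw [Prod.dist_eq]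
        apply max_lt
        · rw [Real.dist_eq]
          have : x - x * (1 - δ) = x * δ := by ring
          rw [this, abs_of_nonneg (by positivity)]
          nlinarith
        · rw [Real.dist_eq, ← h]
          rw [abs_of_nonpos (by linarith)]
          linarith
      · exact subset_closure (mem_U hx h hxy)
    · apply closure_minimal
      · apply Set.iUnion_subset
        intro k
        apply Set.iUnion_subset
        intro hk
        exact Sset_subset k hk
      · have h1 : IsClosed {p : ℝ × ℝ | 0 ≤ p.1} :=
          isClosed_le continuous_const continuous_fst
        have h2 : IsClosed {p : ℝ × ℝ | 0 ≤ p.2} :=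
          isClosed_le continuous_const continuous_snd
        have h3 : IsClosed {p : ℝ × ℝ | p.1 + p.2 ≤ 1} :=
          isClosed_le (continuous_fst.add continuous_snd) continuous_const
        exact (h1.inter (h2.inter h3))
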